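/- Let 1 < y_u < y_w ≤ Ψ(f₀). Then there exists c̄>0 such that for all c ∈ (0,c̄) and all y ≥ y_w, the tangent line to H_l at y_u lies strictly below H_r(·;c): H_l(y_u) + H_l'(y_u)·(y−y_u) < H_r(y;c). -/

import Mathlib

lemma sqrtExp (v : ℝ) : Real.sqrt (Real.exp v) = Real.exp (v/2) := by
  rw [show v = v/2 + v/2 by ring, Real.exp_add, Real.sqrt_mul_self (Real.exp_nonneg _)]
  ring_nf

lemma hasDerivF (a b y : ℝ) (hy : 0 < y) :
    HasDerivAt (fun z => Real.sqrt z * (a + b * Real.log z ^ 2))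
      ((a + b * Real.log y ^ 2 + 4 * b * Real.log y) / (2 * Real.sqrt y)) y := by
  have hs : 0 < Real.sqrt y := Real.sqrt_pos.mpr hy
  have h1 : HasDerivAt Real.sqrt (1 / (2 * Real.sqrt y)) y := Real.hasDerivAt_sqrt hy.ne'
  have hlog : HasDerivAt Real.log y⁻¹ y := Real.hasDerivAt_log hy.ne'
  have h2 : HasDerivAt (fun z => a + b * Real.log z ^ 2)
      (b * (2 * Real.log y ^ 1 * y⁻¹)) y := ((hlog.pow 2).const_mul b).const_add a
  have := h1.mul h2
  refine this.congr_deriv (Eq.symm ?_)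
  have hss : Real.sqrt y * Real.sqrt y = y := Real.mul_self_sqrt hy.le
  field_simp
  ring_nf
  rw [Real.sq_sqrt hy.le]

lemma hasDerivF' (a b y : ℝ) (hy : 0 < y) :
    HasDerivAt (fun z => (a + b * Real.log z ^ 2 + 4 * b * Real.log z) / (2 * Real.sqrt z))
      ((8*b - a - b * Real.log y ^ 2) / (4 * y * Real.sqrt y)) y := by
  have hs : 0 < Real.sqrt y := Real.sqrt_pos.mpr hy
  have hlog : HasDerivAt Real.log y⁻¹ y := Real.hasDerivAt_log hy.ne'
  have hnum : HasDerivAt (fun z => a + b * Real.log z ^ 2 + 4 * b * Real.log z)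
      (b * (2 * Real.log y ^ 1 * y⁻¹) + 4 * b * y⁻¹) y :=
    (((hlog.pow 2).const_mul b).const_add a).add ((hlog.const_mul (4*b)).congr_deriv (by ring))
  have hden : HasDerivAt (fun z => 2 * Real.sqrt z) (2 * (1 / (2 * Real.sqrt y))) y :=
    (Real.hasDerivAt_sqrt hy.ne').const_mul 2
  have := hnum.div hden (by positivity)
  refine this.congr_deriv (Eq.symm ?_)
  have hss : Real.sqrt y * Real.sqrt y = y := Real.mul_self_sqrt hy.le
  field_simp
  ring_nf
  rw [Real.sq_sqrt hy.le]
  ring_nf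


lemma aux_qneg (ab bb t T : ℝ) (hb : 0 < bb) (ht0 : 0 < t) (htT : t < T)
    (hqT : ab + bb * T ^ 2 + 4 * bb * T = 0) : ab + bb * t ^ 2 + 4 * bb * t < 0 := by
  nlinarith [mul_pos hb (mul_pos (sub_pos.mpr htT) (show (0:ℝ) < T + t by linarith)),
    mul_pos hb (sub_pos.mpr htT)]

lemma aux_qpos (ab bb t T : ℝ) (hb : 0 < bb) (ht0 : 0 < t) (htT : t < T)
    (hqT : ab + bb * T ^ 2 + 4 * bb * T = 0) : 0 < 8 * bb - ab - bb * t ^ 2 := by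
  nlinarith [mul_pos hb (mul_pos (sub_pos.mpr htT) (show (0:ℝ) < T + t by linarith)),
    mul_pos hb (ht0.trans htT)]


lemma aux_bound1 (dd c x f : ℝ) (hd : 0 < dd) (hc : 0 < c) (hx : 0 < x) (hxf : x ≤ f) :
    -(1 + dd * (1 + 2 * f)) ≤ dd * (c - 2 * x) + 1 := by nlinarith

lemma aux_bound2 (u M E v : ℝ) (h : -M ≤ v) (hM : 0 ≤ M) (hu : 0 ≤ u) (huE : u ≤ E) :
    -(E * M) ≤ u * v := by nlinarith

lemma aux_exp (s c : ℝ) (hs : 0 < s) (hc : 0 < c) (hc1 : c ≤ 1) :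
    Real.exp (s * c) - 1 ≤ s * c * Real.exp s := by
  have h1 : Real.exp (s * c) ≤ Real.exp s := Real.exp_le_exp.mpr (by nlinarith)
  have h2 : 1 - s * c ≤ Real.exp (-(s * c)) := by linarith [Real.add_one_le_exp (-(s * c))]
  have h3 : Real.exp (-(s * c)) * Real.exp (s * c) = 1 := by
    rw [← Real.exp_add]; simp
  nlinarith [Real.exp_pos (s * c), mul_pos hs hc]

lemma aux_b1 (lam al c x E : ℝ) (hlam : 0 < lam) (hal : 0 < al) (hc : 0 < c) (hx : 0 < x)
    (hE : 0 < E) : -((2 * lam / al) * c) * (x * E) ≤ E * ((lam / al) * c * (c - 2 * x) + c) := by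
  have h : (lam / al) * c * (c - 2 * x) + c + ((2 * lam / al) * c) * x = (lam / al) * c * c + c := by
    ring
  nlinarith [mul_pos (div_pos hlam hal) (mul_pos hc hc)]

lemma aux_xe (s x : ℝ) (hs : 0 < s) (hx : 0 < x) :
    x * Real.exp (s * x) ≤ Real.exp (2 * s * x) / s := by
  have h1 : s * x + 1 ≤ Real.exp (s * x) := Real.add_one_le_exp _
  have h2 : Real.exp (2 * s * x) = Real.exp (s * x) * Real.exp (s * x) := by
    rw [← Real.exp_add]; congr 1; ring
  rw [le_div_iff₀ hs, h2]
  nlinarith [Real.exp_pos (s * x)]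

lemma aux_msum (m g y P : ℝ) (h1 : m + g ≤ 0) (h2 : P ≤ y) : m * (y - P) + g * y ≤ g * P := by
  nlinarith

set_option maxHeartbeats 2000000 in
theorem stmt_7 (α δ lam : ℝ) (hα : 0 < α) (hδ : 0 < δ) (hlam : 0 < lam)
    (hltd : lam < α * δ)
    (f₀ : ℝ)
    (hf₀ : f₀ = (1 / Real.sqrt (2 * α)) * (Real.sqrt ((α * δ + lam) / (α * δ - lam)) - 1))
    (hf₀big : α / (2 * lam) < f₀)
    (Ψ : ℝ → ℝ) (hΨ : ∀ x, Ψ x = Real.exp (2 * Real.sqrt (2 * α) * x))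
    (Hl : ℝ → ℝ)
    (hHl : ∀ y, 0 < y → Hl y = Real.sqrt y *
      (-(lam / α ^ 2) + ((δ - lam / α) / (8 * α)) * (Real.log y) ^ 2))
    (B₀ : ℝ)
    (hB₀ : B₀ = -(2 * f₀ / (α * Real.sqrt (2 * α))) * (α * δ - lam) *
      Real.exp (f₀ * Real.sqrt (2 * α)))
    (hr1 hr2 hr Hr : ℝ → ℝ → ℝ)
    (hhr1 : ∀ c x, hr1 c x = δ * c * (c - 2 * x) + (δ - lam / α) * x ^ 2 + c - lam / α ^ 2)
    (hhr2 : ∀ c x, hr2 c x = (lam / α) * c * (c - 2 * x) + c +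
      B₀ * Real.exp (-(x - c) * Real.sqrt (2 * α)))
    (hhra : ∀ c x, x ≤ f₀ + c → hr c x = hr1 c x)
    (hhrb : ∀ c x, f₀ + c ≤ x → hr c x = hr2 c x)
    (hHr : ∀ c y, 0 < y → Hr c y = Real.sqrt y * hr c (Real.log y / (2 * Real.sqrt (2 * α))))
    (y_u y_w : ℝ) (h1u : 1 < y_u) (huw : y_u < y_w) (hwf : y_w ≤ Ψ f₀) :
    ∃ cbar > 0, ∀ c, 0 < c → c < cbar → ∀ y, y_w ≤ y →
      Hl y_u + deriv Hl y_u * (y - y_u) < Hr c y := by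
  have h2α : (0:ℝ) < 2 * α := by linarith
  set s : ℝ := Real.sqrt (2 * α) with hs_def
  have hs0 : 0 < s := Real.sqrt_pos.mpr h2α
  have hs2 : s ^ 2 = 2 * α := Real.sq_sqrt h2α.le
  have hαδ : 0 < α * δ - lam := by linarith
  have hf₀pos : 0 < f₀ := lt_trans (by positivity) hf₀big
  set a : ℝ := -(lam / α ^ 2) with ha_def
  set b : ℝ := (δ - lam / α) / (8 * α) with hb_def
  have hδl : 0 < δ - lam / α := by
    rw [sub_pos, div_lt_iff₀ hα]; linarith
  have hb : 0 < b := by rw [hb_def]; positivity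
  set F : ℝ → ℝ := fun z => Real.sqrt z * (a + b * Real.log z ^ 2) with hF_def
  have hFHl : ∀ y : ℝ, 0 < y → Hl y = F y := by
    intro y hy; rw [hHl y hy]
  -- basic values
  set T : ℝ := 2 * s * f₀ with hT_def
  have hT0 : 0 < T := by positivity
  set w : ℝ := Real.sqrt ((α * δ + lam) / (α * δ - lam)) with hw_def
  have hrpos : (0:ℝ) < (α * δ + lam) / (α * δ - lam) := by positivity
  have hw2 : w ^ 2 = (α * δ + lam) / (α * δ - lam) := Real.sq_sqrt hrpos.le
  have hfs : f₀ * s = w - 1 := by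
    rw [hf₀]; field_simp
  have h1' : w ^ 2 * (α * δ - lam) = α * δ + lam := by
    rw [hw2]; field_simp
  have hqT : a + b * T ^ 2 + 4 * b * T = 0 := by
    have hTw : T = 2 * (w - 1) := by rw [hT_def]; nlinarith [hfs]
    rw [hTw, ha_def, hb_def]
    field_simp
    linear_combination 4 * h1'
  -- facts about Ψ f₀
  have hΨ₀ : Ψ f₀ = Real.exp (2 * s * f₀) := hΨ f₀
  have hΨ₀pos : 0 < Ψ f₀ := by rw [hΨ₀]; exact Real.exp_pos _
  have hsqrtΨ₀ : Real.sqrt (Ψ f₀) = Real.exp (s * f₀) := by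
    rw [hΨ₀, sqrtExp]; ring_nf
  have hlogΨ₀ : Real.log (Ψ f₀) = T := by
    rw [hΨ₀, Real.log_exp, hT_def]
  have hB₀F : B₀ = F (Ψ f₀) := by
    rw [hB₀, hF_def]
    simp only [hsqrtΨ₀, hlogΨ₀]
    have hbt : a + b * T ^ 2 = -(4 * b * T) := by linarith [hqT]
    rw [hbt, hT_def, hb_def]
    rw [show f₀ * s = s * f₀ by ring]
    have hss : s * s = 2 * α := by rw [← hs2]; ring
    have hco : -(2 * f₀ / (α * s)) * (α * δ - lam)
        = -(4 * ((δ - lam / α) / (8 * α)) * (2 * s * f₀)) := by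
      field_simp
      linear_combination 4 * hss
    linear_combination Real.exp (s * f₀) * hco
  -- derivative facts
  set F' : ℝ → ℝ := fun z => (a + b * Real.log z ^ 2 + 4 * b * Real.log z) / (2 * Real.sqrt z)
    with hF'_def
  have hyu0 : (0:ℝ) < y_u := by linarith
  have hderivHl : deriv Hl y_u = F' y_u := by
    have hev : Hl =ᶠ[nhds y_u] F := by
      filter_upwards [Ioi_mem_nhds hyu0] with z hz using hFHl z hz
    rw [Filter.EventuallyEq.deriv_eq hev, hF_def, hF'_def]
    exact (hasDerivF a b y_u hyu0).deriv
  have hsqrtyu : 0 < Real.sqrt y_u := Real.sqrt_pos.mpr hyu0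
  have hyuΨ : y_u < Ψ f₀ := lt_of_lt_of_le huw hwf
  have hm_neg : F' y_u < 0 := by
    have htu0 : 0 < Real.log y_u := Real.log_pos h1u
    have htuT : Real.log y_u < T := by
      rw [← hlogΨ₀]; exact Real.log_lt_log hyu0 hyuΨ
    have hnum : a + b * Real.log y_u ^ 2 + 4 * b * Real.log y_u < 0 :=
      aux_qneg a b _ T hb htu0 htuT hqT
    rw [hF'_def]
    exact div_neg_of_neg_of_pos hnum (by linarith)
  -- continuity
  have hlogCont : ContinuousOn Real.log (Set.Ioi (0:ℝ)) := by
    apply Real.continuousOn_log.mono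
    intro z hz
    simp only [Set.mem_compl_iff, Set.mem_singleton_iff]
    exact ne_of_gt (show (0:ℝ) < z from hz)
  have hcontF : ContinuousOn F (Set.Ioi (0:ℝ)) := by
    rw [hF_def]
    exact (Real.continuous_sqrt.continuousOn).mul
      (continuousOn_const.add (continuousOn_const.mul (hlogCont.pow 2)))
  have hcontF' : ContinuousOn F' (Set.Ioi (0:ℝ)) := by
    rw [hF'_def]
    apply ContinuousOn.div
    · exact (continuousOn_const.add (continuousOn_const.mul (hlogCont.pow 2))).add
        (continuousOn_const.mul hlogCont)
    · exact (continuous_const.mul Real.continuous_sqrt).continuousOn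
    · intro z hz
      exact ne_of_gt (mul_pos two_pos (Real.sqrt_pos.mpr hz))
  have hIccsub : Set.Icc y_u (Ψ f₀) ⊆ Set.Ioi (0:ℝ) := by
    intro z hz; exact lt_of_lt_of_le hyu0 hz.1
  have hmono : StrictMonoOn F' (Set.Icc y_u (Ψ f₀)) := by
    apply strictMonoOn_of_deriv_pos (convex_Icc _ _) (hcontF'.mono hIccsub)
    intro z hz
    rw [interior_Icc] at hz
    have hz0 : 0 < z := lt_trans hyu0 hz.1
    rw [hF'_def, (hasDerivF' a b z hz0).deriv]
    apply div_pos
    · have h1 : 0 < Real.log z := Real.log_pos (lt_trans h1u hz.1)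
      have h2 : Real.log z < T := by rw [← hlogΨ₀]; exact Real.log_lt_log hz0 hz.2
      exact aux_qpos a b _ T hb h1 h2 hqT
    · exact mul_pos (mul_pos (by norm_num : (0:ℝ) < 4) hz0) (Real.sqrt_pos.mpr hz0)
  -- strict tangent line inequality
  have htangent : ∀ z, y_u < z → z ≤ Ψ f₀ → F y_u + F' y_u * (z - y_u) < F z := by
    intro z hz1 hz2
    have hzsub : Set.Icc y_u z ⊆ Set.Ioi (0:ℝ) := by
      intro u hu; exact lt_of_lt_of_le hyu0 hu.1
    obtain ⟨ξ, hξ, hslope⟩ := exists_hasDerivAt_eq_slope F F' hz1 (hcontF.mono hzsub)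
      (fun u hu => by
        rw [hF_def, hF'_def]
        exact hasDerivF a b u (lt_trans hyu0 hu.1))
    have hm2 : F' y_u < F' ξ := hmono ⟨le_refl y_u, le_of_lt hyuΨ⟩
      ⟨le_of_lt hξ.1, le_trans (le_of_lt hξ.2) hz2⟩ hξ.1
    have hz1' : 0 < z - y_u := by linarith
    rw [eq_div_iff (ne_of_gt hz1')] at hslope
    have := mul_lt_mul_of_pos_right hm2 hz1'
    linarith
  -- minimum of the gap on [y_w, Ψ f₀]
  set φ : ℝ → ℝ := fun z => F z - (F y_u + F' y_u * (z - y_u)) with hφ_def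
  have hIccsub2 : Set.Icc y_w (Ψ f₀) ⊆ Set.Ioi (0:ℝ) := by
    intro z hz
    exact lt_of_lt_of_le (show (0:ℝ) < y_w by linarith) hz.1
  have hcontφ : ContinuousOn φ (Set.Icc y_w (Ψ f₀)) := by
    rw [hφ_def]
    exact (hcontF.mono hIccsub2).sub ((continuous_const.add
      (continuous_const.mul (continuous_id.sub continuous_const))).continuousOn)
  obtain ⟨z₀, hz₀mem, hz₀min⟩ := (isCompact_Icc (a := y_w) (b := Ψ f₀)).exists_isMinOn
    ⟨y_w, le_refl y_w, hwf⟩ hcontφ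
  set ε : ℝ := φ z₀ with hε_def
  have hε : 0 < ε := by
    have h := htangent z₀ (lt_of_lt_of_le huw hz₀mem.1) hz₀mem.2
    rw [hε_def, hφ_def]; simp only []; linarith
  have hmin' : ∀ z ∈ Set.Icc y_w (Ψ f₀), F y_u + F' y_u * (z - y_u) + ε ≤ F z := by
    intro z hz
    have h := hz₀min hz
    simp only [hφ_def, Set.mem_setOf_eq] at h
    rw [hε_def, hφ_def]
    simp only [Set.mem_setOf_eq]
    linarith [h]
  -- constants
  set C₂ : ℝ := Real.exp (s * (f₀ + 1)) * (1 + δ * (1 + 2 * (f₀ + 1))) with hC₂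
  set C₃ : ℝ := -B₀ * s * Real.exp s with hC₃
  set C₄ : ℝ := 2 * lam / (α * s) * Ψ f₀ with hC₄
  have hB₀neg : B₀ < 0 := by
    rw [hB₀]
    apply mul_neg_of_neg_of_pos (mul_neg_of_neg_of_pos _ hαδ) (Real.exp_pos _)
    have h1 : 0 < 2 * f₀ / (α * s) := div_pos (by linarith) (mul_pos hα hs0)
    linarith
  have hMpos : 0 < 1 + δ * (1 + 2 * (f₀ + 1)) := by
    have h1 : 0 < 1 + 2 * (f₀ + 1) := by linarith
    have := mul_pos hδ h1
    linarith
  have hC₂pos : 0 < C₂ := by rw [hC₂]; exact mul_pos (Real.exp_pos _) hMpos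
  have hC₃pos : 0 < C₃ := by
    rw [hC₃]; exact mul_pos (mul_pos (by linarith) hs0) (Real.exp_pos s)
  have hC₄pos : 0 < C₄ := by
    rw [hC₄]; exact mul_pos (div_pos (by linarith) (mul_pos hα hs0)) hΨ₀pos
  refine ⟨min (min 1 (α * s * (-(F' y_u)) / (2 * lam))) (ε / (C₂ + C₃ + C₄ + 1)), ?_, ?_⟩
  · apply lt_min (lt_min one_pos _) _
    · exact div_pos (mul_pos (mul_pos hα hs0) (by linarith)) (by linarith)
    · exact div_pos hε (by linarith)
  intro c hc0 hc1 y hy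
  have hc1' : c < 1 := lt_of_lt_of_le hc1 (le_trans (min_le_left _ _) (min_le_left _ _))
  have hcm : c < α * s * (-(F' y_u)) / (2 * lam) :=
    lt_of_lt_of_le hc1 (le_trans (min_le_left _ _) (min_le_right _ _))
  have hcε : c < ε / (C₂ + C₃ + C₄ + 1) := lt_of_lt_of_le hc1 (min_le_right _ _)
  have hcε' : c * (C₂ + C₃ + C₄ + 1) < ε := (lt_div_iff₀ (by linarith)).mp hcε
  have hcε2 : c * C₂ + c * C₃ + c * C₄ + c < ε := by
    have h : c * (C₂ + C₃ + C₄ + 1) = c * C₂ + c * C₃ + c * C₄ + c := by ring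
    linarith
  have hcm' : c * (2 * lam) < α * s * (-(F' y_u)) := (lt_div_iff₀ (by linarith)).mp hcm
  have hy0 : (0:ℝ) < y := by linarith
  have hy1 : (1:ℝ) < y := by linarith
  have ht0 : 0 < Real.log y := Real.log_pos hy1
  have hgoalHr : Hr c y = Real.sqrt y * hr c (Real.log y / (2 * s)) := hHr c y hy0
  obtain ⟨x, hx⟩ : ∃ x, x = Real.log y / (2 * s) := ⟨_, rfl⟩
  rw [← hx] at hgoalHr
  have hx0 : 0 < x := by rw [hx]; exact div_pos ht0 (by linarith)
  have h2sx : 2 * s * x = Real.log y := by rw [hx]; field_simp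
  have hsqy : Real.sqrt y = Real.exp (s * x) := by
    conv_lhs => rw [← Real.exp_log hy0]
    rw [sqrtExp]
    congr 1
    rw [← h2sx]; ring
  have hyx : y = Real.exp (2 * s * x) := by rw [h2sx, Real.exp_log hy0]
  rw [hFHl y_u hyu0, hderivHl, hgoalHr]
  -- facts at Ψ f₀
  have hminΨ := hmin' (Ψ f₀) ⟨hwf, le_refl _⟩
  have hFΨB : F (Ψ f₀) = B₀ := hB₀F.symm
  by_cases hcase : y ≤ Real.exp (2 * s * (f₀ + c))
  · -- hr1 region
    have hxc : x ≤ f₀ + c := by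
      have h1 : Real.log y ≤ 2 * s * (f₀ + c) := by
        calc Real.log y ≤ Real.log (Real.exp (2 * s * (f₀ + c))) :=
              Real.log_le_log hy0 hcase
          _ = 2 * s * (f₀ + c) := Real.log_exp _
      rw [hx, div_le_iff₀ (by linarith)]
      linarith
    rw [hhra c x hxc, hhr1]
    have hkey1 : Real.sqrt y * (δ * c * (c - 2 * x) + (δ - lam / α) * x ^ 2 + c - lam / α ^ 2)
        = F y + c * (Real.sqrt y * (δ * (c - 2 * x) + 1)) := by
      have h8 : (2 * s * x) ^ 2 = 8 * α * x ^ 2 := by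
        have : (2 * s * x) ^ 2 = 4 * s ^ 2 * x ^ 2 := by ring
        rw [this, hs2]; ring
      have hbx : (δ - lam / α) * x ^ 2 = b * Real.log y ^ 2 := by
        rw [← h2sx, h8, hb_def]
        field_simp
      simp only [hF_def]
      rw [← hbx, ha_def]
      ring
    rw [hkey1]
    -- bound the c-term
    have hxf1 : x ≤ f₀ + 1 := by linarith
    have hsqyb : Real.sqrt y ≤ Real.exp (s * (f₀ + 1)) := by
      rw [hsqy]
      exact Real.exp_le_exp.mpr (mul_le_mul_of_nonneg_left hxf1 hs0.le)
    have hM : -(1 + δ * (1 + 2 * (f₀ + 1))) ≤ δ * (c - 2 * x) + 1 :=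
      aux_bound1 δ c x (f₀ + 1) hδ hc0 hx0 hxf1
    have hterm : -C₂ ≤ Real.sqrt y * (δ * (c - 2 * x) + 1) := by
      rw [hC₂]
      exact aux_bound2 _ _ _ _ hM hMpos.le (Real.sqrt_nonneg y) hsqyb
    have hterm2 : c * -C₂ ≤ c * (Real.sqrt y * (δ * (c - 2 * x) + 1)) :=
      mul_le_mul_of_nonneg_left hterm hc0.le
    have hterm2' : c * -C₂ = -(c * C₂) := by ring
    by_cases hcase2 : y ≤ Ψ f₀
    · have hminy := hmin' y ⟨hy, hcase2⟩
      have h1 : 0 < c * C₃ := mul_pos hc0 hC₃pos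
      have h2 : 0 < c * C₄ := mul_pos hc0 hC₄pos
      linarith
    · push_neg at hcase2
      have hLy : F' y_u * (y - y_u) ≤ F' y_u * (Ψ f₀ - y_u) :=
        mul_le_mul_of_nonpos_left (by linarith) hm_neg.le
      have htT : T ≤ Real.log y := by
        rw [← hlogΨ₀]; exact Real.log_le_log hΨ₀pos hcase2.le
      have hgmono : a + b * T ^ 2 ≤ a + b * Real.log y ^ 2 := by
        have h1 : T ^ 2 ≤ Real.log y ^ 2 := pow_le_pow_left₀ hT0.le htT 2
        have h2 := mul_le_mul_of_nonneg_left h1 hb.le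
        linarith
      have hbT : 0 < b * T := mul_pos hb hT0
      have hgTneg : a + b * T ^ 2 < 0 := by
        have h4 : 4 * b * T = 4 * (b * T) := by ring
        linarith
      have hsqyb2 : Real.sqrt y ≤ Real.exp (s * (f₀ + c)) := by
        rw [hsqy]
        exact Real.exp_le_exp.mpr (mul_le_mul_of_nonneg_left (by linarith) hs0.le)
      have hFyB : B₀ * Real.exp (s * c) ≤ F y := by
        have hs1 : Real.sqrt y * (a + b * T ^ 2) ≤ Real.sqrt y * (a + b * Real.log y ^ 2) :=
          mul_le_mul_of_nonneg_left hgmono (Real.sqrt_nonneg y)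
        have hs2' : Real.exp (s * (f₀ + c)) * (a + b * T ^ 2)
            ≤ Real.sqrt y * (a + b * T ^ 2) :=
          mul_le_mul_of_nonpos_right hsqyb2 hgTneg.le
        have hBval : B₀ = Real.exp (s * f₀) * (a + b * T ^ 2) := by
          rw [hB₀F]; simp only [hF_def]; rw [hsqrtΨ₀, hlogΨ₀]
        have hexpsplit : Real.exp (s * (f₀ + c)) = Real.exp (s * f₀) * Real.exp (s * c) := by
          rw [← Real.exp_add]; congr 1; ring
        have heq : B₀ * Real.exp (s * c) = Real.exp (s * (f₀ + c)) * (a + b * T ^ 2) := by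
          rw [hBval, hexpsplit]; ring
        have hFy : F y = Real.sqrt y * (a + b * Real.log y ^ 2) := by simp only [hF_def]
        linarith
      have hexpc : Real.exp (s * c) - 1 ≤ s * c * Real.exp s := aux_exp s c hs0 hc0 hc1'.le
      have hB₀e : B₀ - c * C₃ ≤ B₀ * Real.exp (s * c) := by
        have h1 : B₀ * (s * c * Real.exp s) ≤ B₀ * (Real.exp (s * c) - 1) :=
          mul_le_mul_of_nonpos_left hexpc hB₀neg.le
        have h2 : B₀ * (s * c * Real.exp s) = -(c * C₃) := by rw [hC₃]; ring
        have h3 : B₀ * (Real.exp (s * c) - 1) = B₀ * Real.exp (s * c) - B₀ := by ring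
        linarith
      have h1 : 0 < c * C₄ := mul_pos hc0 hC₄pos
      linarith
  · -- hr2 region
    push_neg at hcase
    have hxc : f₀ + c ≤ x := by
      have h1 : 2 * s * (f₀ + c) ≤ Real.log y := by
        calc (2 : ℝ) * s * (f₀ + c) = Real.log (Real.exp (2 * s * (f₀ + c))) :=
              (Real.log_exp _).symm
          _ ≤ Real.log y := Real.log_le_log (Real.exp_pos _) hcase.le
      rw [hx, le_div_iff₀ (by linarith)]
      linarith
    rw [hhrb c x hxc, hhr2]
    have hee : Real.exp (s * x) * Real.exp (-(x - c) * s) = Real.exp (s * c) := by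
      rw [← Real.exp_add]; congr 1; ring
    have hkey2 : Real.sqrt y * (lam / α * c * (c - 2 * x) + c + B₀ * Real.exp (-(x - c) * s))
        = Real.exp (s * x) * (lam / α * c * (c - 2 * x) + c) + B₀ * Real.exp (s * c) := by
      rw [hsqy]
      calc Real.exp (s * x) * (lam / α * c * (c - 2 * x) + c + B₀ * Real.exp (-(x - c) * s))
          = Real.exp (s * x) * (lam / α * c * (c - 2 * x) + c)
            + B₀ * (Real.exp (s * x) * Real.exp (-(x - c) * s)) := by ring
        _ = _ := by rw [hee]
    rw [hkey2]
    have hyΨ : Ψ f₀ ≤ y := by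
      rw [hΨ₀]
      have hsc : 0 < s * c := mul_pos hs0 hc0
      have h1 : 2 * s * f₀ ≤ 2 * s * (f₀ + c) := by
        have h2 : 2 * s * (f₀ + c) = 2 * s * f₀ + 2 * (s * c) := by ring
        linarith
      calc Real.exp (2 * s * f₀) ≤ Real.exp (2 * s * (f₀ + c)) := Real.exp_le_exp.mpr h1
        _ ≤ y := hcase.le
    have hLsplit : F' y_u * (y - y_u)
        = F' y_u * (Ψ f₀ - y_u) + F' y_u * (y - Ψ f₀) := by ring
    -- lower bound for the linear-in-c term
    have hterm2 : -(2 * lam / α * c) * (x * Real.exp (s * x))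
        ≤ Real.exp (s * x) * (lam / α * c * (c - 2 * x) + c) :=
      aux_b1 lam α c x _ hlam hα hc0 hx0 (Real.exp_pos _)
    have hxe : x * Real.exp (s * x) ≤ Real.exp (2 * s * x) / s := aux_xe s x hs0 hx0
    have hterm3 : -(2 * lam / (α * s) * c) * y
        ≤ Real.exp (s * x) * (lam / α * c * (c - 2 * x) + c) := by
      have hnp : -(2 * lam / α * c) ≤ 0 := by
        have : 0 < 2 * lam / α * c := mul_pos (div_pos (by linarith) hα) hc0
        linarith
      have h1 : -(2 * lam / α * c) * (Real.exp (2 * s * x) / s)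
          ≤ -(2 * lam / α * c) * (x * Real.exp (s * x)) :=
        mul_le_mul_of_nonpos_left hxe hnp
      have h2 : -(2 * lam / α * c) * (Real.exp (2 * s * x) / s)
          = -(2 * lam / (α * s) * c) * y := by
        rw [hyx]; field_simp
      linarith
    -- combine the slope terms
    have hγm : 2 * lam / (α * s) * c + F' y_u ≤ 0 := by
      have h1 : 2 * lam / (α * s) * c = c * (2 * lam) / (α * s) := by ring
      have h2 : c * (2 * lam) / (α * s) ≤ -(F' y_u) :=
        (div_le_iff₀ (mul_pos hα hs0)).mpr (by linarith [hcm'])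
      linarith
    have hmsum : F' y_u * (y - Ψ f₀) + (2 * lam / (α * s) * c) * y
        ≤ (2 * lam / (α * s) * c) * Ψ f₀ :=
      aux_msum (F' y_u) (2 * lam / (α * s) * c) y (Ψ f₀) (by linarith) hyΨ
    have hC₄eq : (2 * lam / (α * s) * c) * Ψ f₀ = c * C₄ := by rw [hC₄]; ring
    -- exp(s c) lower bound for B₀ term
    have hexpc : Real.exp (s * c) - 1 ≤ s * c * Real.exp s := aux_exp s c hs0 hc0 hc1'.le
    have hB₀e : B₀ - c * C₃ ≤ B₀ * Real.exp (s * c) := by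
      have h1 : B₀ * (s * c * Real.exp s) ≤ B₀ * (Real.exp (s * c) - 1) :=
        mul_le_mul_of_nonpos_left hexpc hB₀neg.le
      have h2 : B₀ * (s * c * Real.exp s) = -(c * C₃) := by rw [hC₃]; ring
      have h3 : B₀ * (Real.exp (s * c) - 1) = B₀ * Real.exp (s * c) - B₀ := by ring
      linarith
    have h1 : 0 < c * C₂ := mul_pos hc0 hC₂pos
    linarith
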